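/- Let X be a metric space, S a nonempty subset of X, μ a Borel probability measure on X, and T : X → X a measure-preserving map for μ. Suppose there exist constants C > 0 and a > 0 such that μ({x : infDist(x, S) < ε}) ≤ C·ε^a for every real ε with 0 < ε ≤ 1, where infDist(x, S) denotes the infimum distance from x to S. Then for every real p' > 1/a, for μ-almost every x ∈ X there exists a constant c > 0 such that infDist(T^j(x), S) ≥ c·(j+1)^{-p'} for every natural number j. -/

import Mathlib

open MeasureTheory

private lemma aux_min (d : ℕ → ℝ) : ∀ N : ℕ, (∀ j < N, 0 < d j) →
    ∃ c : ℝ, 0 < c ∧ ∀ j < N, c ≤ d j := by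
  intro N
  induction N with
  | zero => exact fun _ => ⟨1, one_pos, fun j hj => absurd hj (Nat.not_lt_zero j)⟩
  | succ n ih =>
    intro hd
    obtain ⟨c, hc, hcle⟩ := ih (fun j hj => hd j (hj.trans (Nat.lt_succ_self n)))
    refine ⟨min c (d n), lt_min hc (hd n (Nat.lt_succ_self n)), fun j hj => ?_⟩
    rcases Nat.lt_succ_iff_lt_or_eq.mp hj with h | h
    · exact (min_le_left _ _).trans (hcle j h)
    · exact h ▸ min_le_right _ _

/-- Borel–Cantelli: polynomial tail bounds on neighborhoods of `S` imply that almost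
every orbit approaches `S` at most polynomially fast. -/
theorem stmt18 {X : Type*} [MetricSpace X] [MeasurableSpace X] [BorelSpace X]
    (S : Set X) (hS : S.Nonempty) (μ : Measure X) [IsProbabilityMeasure μ]
    (T : X → X) (hT : MeasurePreserving T μ μ)
    (C a : ℝ) (hC : 0 < C) (ha : 0 < a)
    (h : ∀ ε : ℝ, 0 < ε → ε ≤ 1 →
      μ {x | Metric.infDist x S < ε} ≤ ENNReal.ofReal (C * ε ^ a)) :
    ∀ p' : ℝ, 1 / a < p' → ∀ᵐ x ∂μ, ∃ c : ℝ, 0 < c ∧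
      ∀ j : ℕ, c * ((j : ℝ) + 1) ^ (-p') ≤ Metric.infDist (T^[j] x) S := by
  intro p' hp'
  have hp'pos : 0 < p' := lt_trans (by positivity) hp'
  have hpa : 1 < p' * a := by
    have := (div_lt_iff₀ ha).mp hp'
    linarith
  -- basic facts about ε_j = (j+1)^(-p')
  have hεpos : ∀ j : ℕ, 0 < ((j : ℝ) + 1) ^ (-p') := fun j =>
    Real.rpow_pos_of_pos (by positivity) _
  have hεle1 : ∀ j : ℕ, ((j : ℝ) + 1) ^ (-p') ≤ 1 := fun j =>
    Real.rpow_le_one_of_one_le_of_nonpos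
      (by have := Nat.cast_nonneg (α := ℝ) j; linarith) (by linarith)
  -- measurability of level sets
  have hmeas : ∀ ε : ℝ, MeasurableSet {x : X | Metric.infDist x S < ε} := fun ε =>
    measurableSet_lt (Metric.continuous_infDist_pt S).measurable measurable_const
  -- the sets for Borel–Cantelli
  set E : ℕ → Set X := fun j => T^[j] ⁻¹' {x | Metric.infDist x S < ((j : ℝ) + 1) ^ (-p')}
    with hE
  have hμE : ∀ j, μ (E j) ≤ ENNReal.ofReal (C * ((j : ℝ) + 1) ^ (-(p' * a))) := by
    intro j
    have h1 : μ (E j) = μ {x | Metric.infDist x S < ((j : ℝ) + 1) ^ (-p')} :=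
      (hT.iterate j).measure_preimage (hmeas _).nullMeasurableSet
    rw [h1]
    have := h _ (hεpos j) (hεle1 j)
    have h2 : (((j : ℝ) + 1) ^ (-p')) ^ a = ((j : ℝ) + 1) ^ (-(p' * a)) := by
      rw [← Real.rpow_mul (by positivity : (0:ℝ) ≤ (j : ℝ) + 1), neg_mul]
    rwa [h2] at this
  have hsum : Summable (fun j : ℕ => C * ((j : ℝ) + 1) ^ (-(p' * a))) := by
    apply Summable.mul_left
    have : Summable (fun n : ℕ => (n : ℝ) ^ (-(p' * a))) :=
      Real.summable_nat_rpow.mpr (by linarith)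
    have := (summable_nat_add_iff 1).mpr this
    simpa [Nat.cast_add] using this
  have htsum : (∑' j, μ (E j)) ≠ ⊤ := by
    have h1 : (∑' j, μ (E j)) ≤ ∑' j : ℕ, ENNReal.ofReal (C * ((j : ℝ) + 1) ^ (-(p' * a))) :=
      ENNReal.tsum_le_tsum hμE
    have h2 : (∑' j : ℕ, ENNReal.ofReal (C * ((j : ℝ) + 1) ^ (-(p' * a)))) ≠ ⊤ := by
      rw [← ENNReal.ofReal_tsum_of_nonneg (fun j => by positivity) hsum]
      exact ENNReal.ofReal_ne_top
    exact ne_top_of_le_ne_top h2 h1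
  -- a.e. x is eventually far from S
  have hev : ∀ᵐ x ∂μ, ∀ᶠ j in Filter.atTop, x ∉ E j := ae_eventually_notMem htsum
  -- a.e. x, all iterates have positive distance to S
  have hzero : μ {x | Metric.infDist x S = 0} = 0 := by
    have hle : ∀ n : ℕ, μ {x | Metric.infDist x S = 0} ≤
        ENNReal.ofReal (C * ((1 : ℝ) / (n + 1)) ^ a) := by
      intro n
      refine le_trans (measure_mono ?_) (h ((1 : ℝ) / (n + 1)) (by positivity) ?_)
      · intro x hx
        simp only [Set.mem_setOf_eq] at hx ⊢
        rw [hx]; positivity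
      · rw [div_le_one (by positivity)]; linarith [Nat.cast_nonneg (α := ℝ) n]
    have htend : Filter.Tendsto
        (fun n : ℕ => ENNReal.ofReal (C * ((1 : ℝ) / (n + 1)) ^ a))
        Filter.atTop (nhds 0) := by
      have h1 : Filter.Tendsto (fun n : ℕ => (1 : ℝ) / (n + 1)) Filter.atTop (nhds 0) :=
        tendsto_one_div_add_atTop_nhds_zero_nat
      have h2 : Filter.Tendsto (fun n : ℕ => ((1 : ℝ) / (n + 1)) ^ a) Filter.atTop
          (nhds 0) := by
        have := (Real.continuousAt_rpow_const 0 a (Or.inr ha.le)).tendsto.comp h1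
        simpa [Function.comp_def, Real.zero_rpow ha.ne'] using this
      have h3 : Filter.Tendsto (fun n : ℕ => C * ((1 : ℝ) / (n + 1)) ^ a) Filter.atTop
          (nhds 0) := by simpa using h2.const_mul C
      have := (ENNReal.continuous_ofReal.tendsto 0).comp h3
      simpa [Function.comp_def] using this
    exact le_antisymm (le_of_tendsto_of_tendsto' tendsto_const_nhds htend hle) zero_le
  have hpos : ∀ᵐ x ∂μ, ∀ j : ℕ, 0 < Metric.infDist (T^[j] x) S := by
    rw [ae_all_iff]
    intro j
    have hmeas0 : MeasurableSet {x : X | Metric.infDist x S = 0} :=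
      measurableSet_eq_fun (Metric.continuous_infDist_pt S).measurable measurable_const
    have : μ (T^[j] ⁻¹' {x | Metric.infDist x S = 0}) = 0 := by
      rw [(hT.iterate j).measure_preimage hmeas0.nullMeasurableSet, hzero]
    filter_upwards [measure_eq_zero_iff_ae_notMem.mp this] with x hx
    have h0 : Metric.infDist (T^[j] x) S ≠ 0 := hx
    exact lt_of_le_of_ne Metric.infDist_nonneg (Ne.symm h0)
  -- combine
  filter_upwards [hev, hpos] with x hx hxpos
  obtain ⟨N, hN⟩ := Filter.eventually_atTop.mp hx
  obtain ⟨c₀, hc₀, hc₀le⟩ := aux_min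
    (fun j => Metric.infDist (T^[j] x) S * ((j : ℝ) + 1) ^ p') N
    (fun j _ => by have := hxpos j; positivity)
  refine ⟨min 1 c₀, lt_min one_pos hc₀, fun j => ?_⟩
  rcases lt_or_ge j N with hj | hj
  · have h1 : min 1 c₀ ≤ Metric.infDist (T^[j] x) S * ((j : ℝ) + 1) ^ p' :=
      (min_le_right _ _).trans (hc₀le j hj)
    have h2 : min 1 c₀ * ((j : ℝ) + 1) ^ (-p') ≤
        Metric.infDist (T^[j] x) S * ((j : ℝ) + 1) ^ p' * ((j : ℝ) + 1) ^ (-p') :=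
      mul_le_mul_of_nonneg_right h1 (hεpos j).le
    calc min 1 c₀ * ((j : ℝ) + 1) ^ (-p')
        ≤ Metric.infDist (T^[j] x) S * (((j : ℝ) + 1) ^ p' * ((j : ℝ) + 1) ^ (-p')) := by
          linarith [h2, mul_assoc (Metric.infDist (T^[j] x) S) (((j : ℝ) + 1) ^ p')
            (((j : ℝ) + 1) ^ (-p'))]
      _ = Metric.infDist (T^[j] x) S := by
          rw [← Real.rpow_add (by positivity)]; simp
  · have hnot := hN j hj
    have h1 : ((j : ℝ) + 1) ^ (-p') ≤ Metric.infDist (T^[j] x) S := by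
      by_contra hlt
      exact hnot (by simpa [hE] using lt_of_not_ge hlt)
    calc min 1 c₀ * ((j : ℝ) + 1) ^ (-p') ≤ 1 * ((j : ℝ) + 1) ^ (-p') :=
          mul_le_mul_of_nonneg_right (min_le_left _ _) (hεpos j).le
      _ = ((j : ℝ) + 1) ^ (-p') := one_mul _
      _ ≤ _ := h1
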